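/- Let A be an associative algebra over Q with Hasse-Schmidt derivation (id, d_1, d_2, ...), and let ∂_n = Σ_{r_1+...+r_m=n} (-1)^{m+1} d_{r_1}...d_{r_m}/m. Then d_n = Σ_{r_1+...+r_m=n} ∂_{r_1} ∂_{r_2} ... ∂_{r_m} / m!, summed over all compositions of n. -/

import Mathlib

namespace HSaux

noncomputable def fw (b : ℕ) : ℚ := (-1)^(b+1)/b

/-- rotate a composition -/
def rot {N : ℕ} (i : ℕ) (c : Composition N) : Composition N where
  blocks := c.blocks.rotate i
  blocks_pos := fun hb => c.blocks_pos ((List.rotate_perm c.blocks i).mem_iff.mp hb)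
  blocks_sum := by rw [(List.rotate_perm c.blocks i).sum_eq]; exact c.blocks_sum

@[simp] lemma rot_blocks {N : ℕ} (i : ℕ) (c : Composition N) :
    (rot i c).blocks = c.blocks.rotate i := rfl

@[simp] lemma rot_length {N : ℕ} (i : ℕ) (c : Composition N) :
    (rot i c).length = c.length := by
  simp [Composition.length, rot]

lemma rot_rot {N : ℕ} (i j : ℕ) (c : Composition N) :
    rot j (rot i c) = rot (i + j) c := by
  ext1; simp [rot, List.rotate_rotate]

lemma rot_self {N : ℕ} (c : Composition N) : rot c.length c = c := by
  ext1; simp [rot, Composition.length, List.rotate_length]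

lemma rot_w {N : ℕ} (i : ℕ) (c : Composition N) :
    ((rot i c).blocks.map fw).prod = (c.blocks.map fw).prod :=
  (((List.rotate_perm c.blocks i)).map fw).prod_eq

lemma headI_rot {N : ℕ} {i : ℕ} {c : Composition N} (hi : i < c.length) :
    (rot i c).blocks.headI = c.blocks[i]'(hi) := by
  have hlen : 0 < (c.blocks.rotate i).length := by
    rw [List.length_rotate]; exact lt_of_le_of_lt (Nat.zero_le _) hi
  have h0 : ∀ (l : List ℕ) (h : 0 < l.length), l.headI = l[0]'(h) := by
    intro l h
    cases l with
    | nil => simp at h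
    | cons a t => simp
  rw [rot_blocks, h0 _ hlen, List.getElem_rotate]
  congr 1
  simp [Nat.mod_eq_of_lt hi]

end HSaux

namespace HSaux

lemma sum_getD {M : Type*} [AddCommMonoid M] (l : List M) :
    l.sum = ∑ i ∈ Finset.range l.length, l.getD i 0 := by
  induction l with
  | nil => simp
  | cons a t ih => rw [List.length_cons, Finset.sum_range_succ']; simp [ih, add_comm]

lemma key1 (N m : ℕ) :
    (N : ℚ) * ∑ c ∈ Finset.univ.filter (fun c : Composition N => c.length = m),
        (c.blocks.map fw).prod
      = (m : ℚ) * ∑ c ∈ Finset.univ.filter (fun c : Composition N => c.length = m),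
        (c.blocks.headI : ℚ) * (c.blocks.map fw).prod := by
  set s := Finset.univ.filter (fun c : Composition N => c.length = m) with hs
  have hmem : ∀ c : Composition N, c ∈ s ↔ c.length = m := by
    intro c; simp [hs]
  -- rotation invariance step
  have hrot : ∀ i ∈ Finset.range m,
      (∑ c ∈ s, ((c.blocks.getD i 0 : ℕ) : ℚ) * (c.blocks.map fw).prod)
        = ∑ c ∈ s, (c.blocks.headI : ℚ) * (c.blocks.map fw).prod := by
    intro i hi
    have him : i < m := Finset.mem_range.mp hi
    refine Finset.sum_nbij' (i := rot i) (j := rot (m - i)) ?_ ?_ ?_ ?_ ?_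
    · intro c hc; rw [hmem] at hc ⊢; rw [rot_length, hc]
    · intro c hc; rw [hmem] at hc ⊢; rw [rot_length, hc]
    · intro c hc
      rw [hmem] at hc
      rw [rot_rot, Nat.add_sub_cancel' (le_of_lt him), ← hc, rot_self]
    · intro c hc
      rw [hmem] at hc
      rw [rot_rot, Nat.sub_add_cancel (le_of_lt him), ← hc, rot_self]
    · intro c hc
      rw [hmem] at hc
      have hil : i < c.length := by rw [hc]; exact him
      rw [headI_rot hil, rot_w]
      congr 2
      exact List.getD_eq_getElem c.blocks 0 hil
  calc (N : ℚ) * ∑ c ∈ s, (c.blocks.map fw).prod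
      = ∑ c ∈ s, ∑ i ∈ Finset.range m, ((c.blocks.getD i 0 : ℕ) : ℚ) * (c.blocks.map fw).prod := by
        rw [Finset.mul_sum]
        apply Finset.sum_congr rfl
        intro c hc
        rw [hmem] at hc
        have h1 : N = ∑ i ∈ Finset.range m, c.blocks.getD i 0 := by
          conv_lhs => rw [← c.blocks_sum]
          rw [sum_getD, show c.blocks.length = m from hc]
        have h2 : (N : ℚ) = ∑ i ∈ Finset.range m, ((c.blocks.getD i 0 : ℕ) : ℚ) := by
          exact_mod_cast congrArg (fun k : ℕ => (k : ℚ)) h1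
        rw [h2, Finset.sum_mul]
    _ = ∑ i ∈ Finset.range m, ∑ c ∈ s, ((c.blocks.getD i 0 : ℕ) : ℚ) * (c.blocks.map fw).prod :=
        Finset.sum_comm
    _ = ∑ _i ∈ Finset.range m, ∑ c ∈ s, (c.blocks.headI : ℚ) * (c.blocks.map fw).prod :=
        Finset.sum_congr rfl hrot
    _ = (m : ℚ) * ∑ c ∈ s, (c.blocks.headI : ℚ) * (c.blocks.map fw).prod := by
        rw [Finset.sum_const, Finset.card_range, nsmul_eq_mul]

end HSaux

namespace HSaux

lemma headI_cons_tail {α : Type*} [Inhabited α] (l : List α) (h : l ≠ []) :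
    l.headI :: l.tail = l := by
  cases l with
  | nil => exact absurd rfl h
  | cons a t => rfl

lemma comp_heq {N M : ℕ} (h : N = M) (c : Composition N) (c' : Composition M)
    (hb : c.blocks = c'.blocks) : HEq c c' := by
  subst h
  rw [heq_iff_eq]
  ext1
  exact hb

lemma tail_sum (l : List ℕ) : l.tail.sum = l.sum - l.headI := by
  cases l with
  | nil => simp
  | cons a t => simp

lemma blocks_ne_nil {N : ℕ} (hN : 1 ≤ N) (c : Composition N) : c.blocks ≠ [] := by
  intro h
  have := c.blocks_sum
  rw [h] at this
  simp at this
  omega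

lemma headI_pos {N : ℕ} (hN : 1 ≤ N) (c : Composition N) : 1 ≤ c.blocks.headI := by
  cases hb : c.blocks with
  | nil => exact absurd hb (blocks_ne_nil hN c)
  | cons a t =>
      have : a ∈ c.blocks := by rw [hb]; exact List.mem_cons_self
      simpa [Nat.one_le_iff_ne_zero, Nat.pos_iff_ne_zero] using c.blocks_pos this

lemma headI_le {N : ℕ} (c : Composition N) : c.blocks.headI ≤ N := by
  cases hb : c.blocks with
  | nil => simp
  | cons a t =>
      have := c.blocks_sum
      rw [hb] at this
      simp only [List.sum_cons] at this
      simp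
      omega

/-- tail of a composition -/
def tailC {N : ℕ} (c : Composition N) : Composition (N - c.blocks.headI) where
  blocks := c.blocks.tail
  blocks_pos := fun hb => c.blocks_pos (List.mem_of_mem_tail hb)
  blocks_sum := by rw [tail_sum, c.blocks_sum]

/-- cons for compositions, with junk value -/
def consC (N : ℕ) (p : Σ b : ℕ, Composition (N - b)) : Composition N :=
  if h : 1 ≤ p.1 ∧ p.1 ≤ N then
    { blocks := p.1 :: p.2.blocks
      blocks_pos := by
        intro i hi
        rcases List.mem_cons.mp hi with rfl | hi
        · exact h.1
        · exact p.2.blocks_pos hi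
      blocks_sum := by
        simp only [List.sum_cons, p.2.blocks_sum]
        omega }
  else Composition.ones N

noncomputable def Ew' (K : ℕ) : ℚ :=
  ∑ c : Composition K, ((c.length.factorial : ℚ))⁻¹ * (c.blocks.map fw).prod

lemma keyrec (N : ℕ) (hN : 1 ≤ N) :
    (N : ℚ) * Ew' N = ∑ b ∈ Finset.Icc 1 N, (-1 : ℚ)^(b+1) * Ew' (N - b) := by
  have step1 : (N : ℚ) * Ew' N
      = ∑ c : Composition N,
          ((c.length : ℚ) * ((c.length.factorial : ℚ))⁻¹) * ((c.blocks.headI : ℚ)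
            * (c.blocks.map fw).prod) := by
    rw [Ew', Finset.mul_sum]
    rw [← Finset.sum_fiberwise_of_maps_to (g := fun c : Composition N => c.length)
      (t := Finset.range (N+1)) (fun c _ => Finset.mem_range.mpr (Nat.lt_succ_of_le c.length_le)) _]
    rw [← Finset.sum_fiberwise_of_maps_to (g := fun c : Composition N => c.length)
      (t := Finset.range (N+1)) (fun c _ => Finset.mem_range.mpr (Nat.lt_succ_of_le c.length_le)) _]
    apply Finset.sum_congr rfl
    intro m _
    have hset : ∀ c ∈ Finset.univ.filter (fun c : Composition N => c.length = m),
        c.length = m := by intro c hc; exact (Finset.mem_filter.mp hc).2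
    calc ∑ c ∈ Finset.univ.filter (fun c : Composition N => c.length = m),
          (N : ℚ) * (((c.length.factorial : ℚ))⁻¹ * (c.blocks.map fw).prod)
        = ((m.factorial : ℚ))⁻¹ * ((N : ℚ) *
            ∑ c ∈ Finset.univ.filter (fun c : Composition N => c.length = m),
              (c.blocks.map fw).prod) := by
          rw [Finset.mul_sum, Finset.mul_sum]
          apply Finset.sum_congr rfl
          intro c hc
          rw [hset c hc]; ring
      _ = ((m.factorial : ℚ))⁻¹ * ((m : ℚ) *
            ∑ c ∈ Finset.univ.filter (fun c : Composition N => c.length = m),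
              (c.blocks.headI : ℚ) * (c.blocks.map fw).prod) := by rw [key1]
      _ = ∑ c ∈ Finset.univ.filter (fun c : Composition N => c.length = m),
            ((c.length : ℚ) * ((c.length.factorial : ℚ))⁻¹) * ((c.blocks.headI : ℚ)
              * (c.blocks.map fw).prod) := by
          rw [Finset.mul_sum, Finset.mul_sum]
          apply Finset.sum_congr rfl
          intro c hc
          rw [hset c hc]; ring
  rw [step1]
  have step2 : ∑ b ∈ Finset.Icc 1 N, (-1 : ℚ)^(b+1) * Ew' (N - b)
      = ∑ p ∈ (Finset.Icc 1 N).sigma (fun b => (Finset.univ : Finset (Composition (N - b)))),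
          (-1 : ℚ)^(p.1+1) * (((p.2.length.factorial : ℚ))⁻¹ * (p.2.blocks.map fw).prod) := by
    rw [Finset.sum_sigma]
    apply Finset.sum_congr rfl
    intro b _
    rw [Ew', Finset.mul_sum]
  rw [step2]
  refine Finset.sum_nbij' (i := fun c => (⟨c.blocks.headI, tailC c⟩ : Σ b : ℕ, Composition (N - b)))
    (j := consC N) ?_ ?_ ?_ ?_ ?_
  · intro c _
    rw [Finset.mem_sigma]
    exact ⟨Finset.mem_Icc.mpr ⟨headI_pos hN c, headI_le c⟩, Finset.mem_univ _⟩
  · intro p _; exact Finset.mem_univ _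
  · intro c _
    have h : 1 ≤ c.blocks.headI ∧ c.blocks.headI ≤ N := ⟨headI_pos hN c, headI_le c⟩
    simp only [consC, dif_pos h]
    ext1
    exact headI_cons_tail _ (blocks_ne_nil hN c)
  · intro p hp
    rw [Finset.mem_sigma, Finset.mem_Icc] at hp
    rcases p with ⟨b, c'⟩
    have h' : 1 ≤ b ∧ b ≤ N := hp.1
    have hc : (consC N ⟨b, c'⟩).blocks = b :: c'.blocks := by
      simp [consC, dif_pos h']
    have h1 : (consC N ⟨b, c'⟩).blocks.headI = b := by rw [hc]; rfl
    refine Sigma.ext h1 ?_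
    refine comp_heq (by exact congrArg (fun t => N - t) h1) _ _ ?_
    show (consC N ⟨b, c'⟩).blocks.tail = c'.blocks
    rw [hc]
    rfl
  · intro c _
    have h1 : 1 ≤ c.blocks.headI := headI_pos hN c
    have hlen : c.length = (tailC c).length + 1 := by
      simp only [Composition.length, tailC]
      conv_lhs => rw [← headI_cons_tail c.blocks (blocks_ne_nil hN c)]
      simp
    have hw : (c.blocks.map fw).prod = fw c.blocks.headI * ((tailC c).blocks.map fw).prod := by
      conv_lhs => rw [← headI_cons_tail c.blocks (blocks_ne_nil hN c)]
      simp [tailC]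
    rw [hlen, hw, Nat.factorial_succ]
    simp only [fw]
    have hh : ((c.blocks.headI : ℚ)) ≠ 0 := by
      exact_mod_cast Nat.one_le_iff_ne_zero.mp h1
    have h2 : (((tailC c).length : ℚ) + 1) ≠ 0 := by positivity
    have h3 : (((tailC c).length.factorial : ℚ)) ≠ 0 := by
      exact_mod_cast Nat.factorial_ne_zero _
    push_cast
    field_simp

end HSaux

namespace HSaux

lemma comp_zero_blocks (c : Composition 0) : c.blocks = [] := by
  have h := c.blocks_sum
  cases hb : c.blocks with
  | nil => rfl
  | cons a t =>
      exfalso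
      have ha : 0 < a := c.blocks_pos (by rw [hb]; exact List.mem_cons_self)
      rw [hb] at h
      simp [List.sum_cons] at h
      omega

lemma Ew'_zero : Ew' 0 = 1 := by
  have hu : ∀ c : Composition 0, c = Composition.ones 0 := by
    intro c
    ext1
    rw [comp_zero_blocks c]
    exact (comp_zero_blocks _).symm
  rw [Ew']
  rw [Finset.sum_eq_single (Composition.ones 0)]
  · simp [Composition.ones, Composition.length]
  · intro c _ hc; exact absurd (hu c) hc
  · intro h; exact absurd (Finset.mem_univ _) h

lemma Ew'_one : Ew' 1 = 1 := by
  have h := keyrec 1 (le_refl 1)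
  simp [Ew'_zero] at h
  exact h

lemma Ew'_big : ∀ K, 2 ≤ K → Ew' K = 0 := by
  intro K
  induction K using Nat.strong_induction_on with
  | _ K ih =>
    intro hK
    have hrec := keyrec K (by omega)
    have hsub : ({K-1, K} : Finset ℕ) ⊆ Finset.Icc 1 K := by
      intro x hx
      simp only [Finset.mem_insert, Finset.mem_singleton] at hx
      rw [Finset.mem_Icc]
      omega
    have hzero : ∀ b ∈ Finset.Icc 1 K, b ∉ ({K-1, K} : Finset ℕ) →
        (-1:ℚ)^(b+1) * Ew' (K-b) = 0 := by
      intro b hb hb2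
      rw [Finset.mem_Icc] at hb
      simp only [Finset.mem_insert, Finset.mem_singleton] at hb2
      push_neg at hb2
      rw [ih (K-b) (by omega) (by omega), mul_zero]
    rw [← Finset.sum_subset hsub hzero] at hrec
    rw [Finset.sum_pair (by omega : K - 1 ≠ K)] at hrec
    rw [show K - 1 + 1 = K from by omega, show K - (K-1) = 1 from by omega,
      Nat.sub_self, Ew'_one, Ew'_zero, mul_one, mul_one, pow_succ] at hrec
    have hKne : (K : ℚ) ≠ 0 := by exact_mod_cast by omega
    have : (K:ℚ) * Ew' K = 0 := by rw [hrec]; ring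
    rcases mul_eq_zero.mp this with h | h
    · exact absurd h hKne
    · exact h

lemma Ew'_eq (K : ℕ) (hK : 1 ≤ K) : Ew' K = if K = 1 then 1 else 0 := by
  rcases eq_or_lt_of_le hK with h | h
  · rw [← h]; simp [Ew'_one]
  · rw [if_neg (by omega), Ew'_big K (by omega)]

end HSaux



namespace HSaux

variable {A : Type*} [Ring A] [Algebra ℚ A]

lemma expandL (d D : ℕ → AddMonoid.End A)
    (hD : ∀ n, 1 ≤ n → ∀ a : A,
      D n a = ∑ c : Composition n,
        ((-1 : ℚ) ^ (c.length + 1) / c.length) • ((c.blocks.map d).prod a)) :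
    ∀ (l : List ℕ), (∀ b ∈ l, 1 ≤ b) → ∀ a : A,
      (l.map D).prod a
        = ∑ E : (∀ i : Fin l.length, Composition (l.get i)),
            (∏ i, ((-1 : ℚ) ^ ((E i).length + 1) / ((E i).length : ℚ))) •
              ((((List.ofFn fun i => (E i).blocks).flatten).map d).prod a) := by
  intro l
  induction l with
  | nil =>
      intro _ a
      haveI : Unique (∀ i : Fin ([] : List ℕ).length, Composition (([] : List ℕ).get i)) :=
        ⟨⟨fun i => Fin.elim0 i⟩, fun E => funext fun i => Fin.elim0 i⟩
      rw [Fintype.sum_unique]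
      haveI : IsEmpty (Fin ([] : List ℕ).length) := ⟨fun i => Fin.elim0 i⟩
      rw [Finset.univ_eq_empty, Finset.prod_empty, one_smul]
      rfl
  | cons b t ih =>
      intro hl a
      have hb : 1 ≤ b := hl b (List.mem_cons_self)
      have ht : ∀ x ∈ t, 1 ≤ x := fun x hx => hl x (List.mem_cons_of_mem _ hx)
      have step1 : ((b :: t).map D).prod a = D b ((t.map D).prod a) := rfl
      rw [step1, ih ht a, map_sum]
      have step2 : ∀ x : A, ∀ q : ℚ, D b (q • x) = q • D b x := fun x q => map_rat_smul (D b) q x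
      calc (∑ E : (∀ i : Fin t.length, Composition (t.get i)),
              D b ((∏ i, ((-1 : ℚ) ^ ((E i).length + 1) / ((E i).length : ℚ))) •
                ((((List.ofFn fun i => (E i).blocks).flatten).map d).prod a)))
          = ∑ E : (∀ i : Fin t.length, Composition (t.get i)),
              ∑ e : Composition b,
              ((∏ i, ((-1 : ℚ) ^ ((E i).length + 1) / ((E i).length : ℚ))) *
                ((-1 : ℚ) ^ (e.length + 1) / e.length)) •
                (((e.blocks ++ (List.ofFn fun i => (E i).blocks).flatten).map d).prod a) := by
            apply Finset.sum_congr rfl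
            intro E _
            rw [step2, hD b hb, Finset.smul_sum]
            apply Finset.sum_congr rfl
            intro e _
            rw [smul_smul, mul_comm]
            congr 1
            rw [List.map_append, List.prod_append]
            rfl
        _ = ∑ p : Composition b × (∀ i : Fin t.length, Composition (t.get i)),
              ((∏ i, ((-1 : ℚ) ^ ((p.2 i).length + 1) / ((p.2 i).length : ℚ))) *
                ((-1 : ℚ) ^ (p.1.length + 1) / p.1.length)) •
                (((p.1.blocks ++ (List.ofFn fun i => (p.2 i).blocks).flatten).map d).prod a) := by
            rw [Fintype.sum_prod_type]
            rw [Finset.sum_comm]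
        _ = ∑ E : (∀ i : Fin (t.length + 1), Composition ((b :: t).get i)),
              (∏ i, ((-1 : ℚ) ^ ((E i).length + 1) / ((E i).length : ℚ))) •
                ((((List.ofFn fun i => (E i).blocks).flatten).map d).prod a) := by
            refine Fintype.sum_equiv
              (Fin.consEquiv fun i : Fin (t.length + 1) => Composition ((b :: t).get i)) _ _ ?_
            rintro ⟨e, Et⟩
            rw [Fin.prod_univ_succ]
            simp only [Fin.consEquiv_apply, Fin.cons_zero, Fin.cons_succ, List.ofFn_succ,
              List.flatten_cons, List.map_append, List.prod_append]
            rw [mul_comm]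
        _ = ∑ E : (∀ i : Fin (b :: t).length, Composition ((b :: t).get i)),
              (∏ i, ((-1 : ℚ) ^ ((E i).length + 1) / ((E i).length : ℚ))) •
                ((((List.ofFn fun i => (E i).blocks).flatten).map d).prod a) := rfl

end HSaux


namespace HSaux

variable {A : Type*} [Ring A] [Algebra ℚ A]

end HSaux

theorem stmt_16 {A : Type*} [Ring A] [Algebra ℚ A]
    (d : ℕ → AddMonoid.End A) (hd0 : d 0 = 1)
    (hHS : ∀ n, 1 ≤ n → ∀ a b : A,
      d n (a * b) = ∑ i ∈ Finset.range (n + 1), d i a * d (n - i) b)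
    (D : ℕ → AddMonoid.End A)
    (hD : ∀ n, 1 ≤ n → ∀ a : A,
      D n a = ∑ c : Composition n,
        ((-1 : ℚ) ^ (c.length + 1) / c.length) • ((c.blocks.map d).prod a)) :
    ∀ n, 1 ≤ n → ∀ a : A,
      d n a = ∑ c : Composition n,
        ((c.length.factorial : ℚ))⁻¹ • ((c.blocks.map D).prod a) := by
  intro n hn a
  symm
  have hn0 : 0 < n := hn
  calc ∑ c : Composition n, ((c.length.factorial : ℚ))⁻¹ • ((c.blocks.map D).prod a)
      = ∑ c : Composition n, ∑ E : (∀ i : Fin c.blocks.length, Composition (c.blocks.get i)),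
          (((c.length.factorial : ℚ))⁻¹ * ∏ i, HSaux.fw ((E i).length)) •
            ((((List.ofFn fun i => (E i).blocks).flatten).map d).prod a) := by
        apply Finset.sum_congr rfl
        intro c _
        rw [HSaux.expandL d D hD c.blocks (fun b hb => c.blocks_pos hb) a, Finset.smul_sum]
        apply Finset.sum_congr rfl
        intro E _
        rw [smul_smul]
        simp only [HSaux.fw]
    _ = ∑ x : (Σ c : Composition n, ∀ i : Fin c.length, Composition (c.blocksFun i)),
          (((x.1.length.factorial : ℚ))⁻¹ * ∏ i, HSaux.fw ((x.2 i).length)) •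
            ((((List.ofFn fun i => (x.2 i).blocks).flatten).map d).prod a) := by
        rw [← Finset.univ_sigma_univ, Finset.sum_sigma]
        rfl
    _ = ∑ y : (Σ α : Composition n, Composition α.length),
          (((y.2.length.factorial : ℚ))⁻¹ * ((y.2.blocks.map HSaux.fw).prod)) •
            ((y.1.blocks.map d).prod a) := by
        refine Fintype.sum_equiv ((Composition.sigmaEquivSigmaPi n).symm) _ _ ?_
        rintro ⟨c, E⟩
        have hb2 : ((Composition.sigmaEquivSigmaPi n).symm ⟨c, E⟩).2.blocks
            = List.ofFn (fun j => (E j).length) := rfl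
        have hb1 : ((Composition.sigmaEquivSigmaPi n).symm ⟨c, E⟩).1.blocks
            = (List.ofFn fun j => (E j).blocks).flatten := rfl
        have hlen : ((Composition.sigmaEquivSigmaPi n).symm ⟨c, E⟩).2.length = c.length := by
          rw [← Composition.blocks_length, hb2, List.length_ofFn]
        congr 1
        rw [hlen, hb2, List.map_ofFn, List.prod_ofFn]
        rfl
    _ = ∑ α : Composition n, ∑ β : Composition α.length,
          (((β.length.factorial : ℚ))⁻¹ * ((β.blocks.map HSaux.fw).prod)) •
            ((α.blocks.map d).prod a) := by
        rw [← Finset.univ_sigma_univ, Finset.sum_sigma]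
    _ = ∑ α : Composition n, (HSaux.Ew' α.length) • ((α.blocks.map d).prod a) := by
        apply Finset.sum_congr rfl
        intro α _
        rw [← Finset.sum_smul, HSaux.Ew']
    _ = ∑ α : Composition n, (if α.length = 1 then ((α.blocks.map d).prod a) else 0) := by
        apply Finset.sum_congr rfl
        intro α _
        rw [HSaux.Ew'_eq _ (α.length_pos_of_pos hn0), ite_smul, one_smul, zero_smul]
    _ = d n a := by
        rw [Finset.sum_eq_single_of_mem (Composition.single n hn0) (Finset.mem_univ _)]
        · rw [if_pos]
          · rw [Composition.single_blocks]
            show (d n * 1) a = d n a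
            rw [mul_one]
          · rw [← Composition.blocks_length, Composition.single_blocks]
            rfl
        · intro α _ hne
          rw [if_neg]
          intro hlen1
          exact hne ((Composition.eq_single_iff_length hn0).mpr hlen1)
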